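/- Under the non-parallelism assumption, the index j is the unique maximizer of i ↦ |[W⁻¹ P e_j]_i|; that is, |[W⁻¹ P e_j]_i| < [W⁻¹ P e_j]_j for all i ≠ j. -/

import Mathlib

open Matrix Finset RealInnerProductSpace

noncomputable def enormFin {n : ℕ} (v : Fin n → ℝ) : ℝ := Real.sqrt (∑ i, v i ^ 2)

noncomputable def wInvP {n : ℕ} (P : Matrix (Fin n) (Fin n) ℝ) (j i : Fin n) : ℝ :=
  P.mulVec (Pi.single j 1) i / enormFin (P.mulVec (Pi.single i 1))

/-- Under the non-parallelism assumption, `j` is the unique maximizer of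
`i ↦ |[W⁻¹ P e_j]_i|`; that is, `|[W⁻¹ P e_j]_i| < [W⁻¹ P e_j]_j` for all `i ≠ j`. -/
theorem wInvP_strict_max {n : ℕ}
    (P : Matrix (Fin n) (Fin n) ℝ) (hsymm : Pᵀ = P) (hidem : P * P = P)
    (hnz : ∀ i : Fin n, P.mulVec (Pi.single i 1) ≠ 0)
    (j : Fin n)
    (hpar : ∀ i : Fin n, i ≠ j → ∀ c : ℝ,
      P.mulVec (Pi.single j 1) ≠ c • P.mulVec (Pi.single i 1)) :
    ∀ i : Fin n, i ≠ j → |wInvP P j i| < wInvP P j j := by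
  intro i hij
  have hcol : ∀ m : Fin n, P.mulVec (Pi.single m 1) = fun k => P k m := by
    intro m; ext k; simp [Matrix.mulVec_single]
  set col : Fin n → EuclideanSpace ℝ (Fin n) := fun p => WithLp.toLp 2 (fun k => P k p) with hcoldef
  set a : EuclideanSpace ℝ (Fin n) := col i with ha
  set b : EuclideanSpace ℝ (Fin n) := col j with hb
  have ha0 : a ≠ 0 := by
    have := hnz i; rw [hcol i] at this
    intro h; apply this; ext k; exact congrFun (congrArg (fun f : EuclideanSpace ℝ (Fin n) => (f : Fin n → ℝ)) h) k
  have hb0 : b ≠ 0 := by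
    have := hnz j; rw [hcol j] at this
    intro h; apply this; ext k; exact congrFun (congrArg (fun f : EuclideanSpace ℝ (Fin n) => (f : Fin n → ℝ)) h) k
  -- inner products are entries of P
  have hinner : ∀ p q : Fin n, ⟪col p, col q⟫ = P p q := by
    intro p q
    have : (Pᵀ * P) p q = ∑ k, P k p * P k q := by
      simp [Matrix.mul_apply, Matrix.transpose_apply]
    rw [hsymm, hidem] at this
    rw [PiLp.inner_apply]
    simpa [RCLike.inner_apply, hcoldef, mul_comm] using this.symm
  have hab : ⟪a, b⟫ = P i j := hinner i j
  have hbb : ⟪b, b⟫ = P j j := hinner j j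
  have haa : ⟪a, a⟫ = P i i := hinner i i
  -- norms
  have hnorm : ∀ p : Fin n, enormFin (fun k => P k p) = ‖col p‖ := by
    intro p
    rw [EuclideanSpace.norm_eq, enormFin]
    congr 1; apply Finset.sum_congr rfl; intro k _
    rw [Real.norm_eq_abs, sq_abs]
  have hbn : ‖b‖ ^ 2 = P j j := by rw [← hbb, real_inner_self_eq_norm_sq]
  -- strict Cauchy-Schwarz
  have hCS : |⟪a, b⟫| < ‖a‖ * ‖b‖ := by
    rcases lt_or_eq_of_le (abs_real_inner_le_norm a b) with h | h
    · exact h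
    · exfalso
      have hone : |⟪a, b⟫ / (‖a‖ * ‖b‖)| = 1 := by
        rw [abs_div, h, abs_of_nonneg (by positivity)]
        have hpos : (0:ℝ) < ‖a‖ * ‖b‖ :=
          mul_pos (norm_pos_iff.mpr ha0) (norm_pos_iff.mpr hb0)
        field_simp
      obtain ⟨-, r, hr, hrb⟩ := (abs_real_inner_div_norm_mul_norm_eq_one_iff a b).mp hone
      apply hpar i hij r
      rw [hcol j, hcol i]
      ext k
      have := congrFun (congrArg (fun f : EuclideanSpace ℝ (Fin n) => (f : Fin n → ℝ)) hrb) k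
      simpa using this
  -- assemble
  have hane : ‖a‖ > 0 := norm_pos_iff.mpr ha0
  have hbne : ‖b‖ > 0 := norm_pos_iff.mpr hb0
  have hval : wInvP P j j = ‖b‖ := by
    rw [wInvP, hcol j, hnorm j]
    show P j j / ‖b‖ = ‖b‖
    rw [← hbn, sq]
    field_simp
  have hval2 : wInvP P j i = P i j / ‖a‖ := by
    rw [wInvP, hcol j, hcol i, hnorm i]
  rw [hval, hval2, abs_div, abs_of_pos hane, div_lt_iff₀ hane, ← hab]
  calc |⟪a, b⟫| < ‖a‖ * ‖b‖ := hCS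
    _ = ‖b‖ * ‖a‖ := mul_comm _ _
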